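/- Let T be an acute unit-area triangle with z(T) = z₀ ∈ ℍ (0 < Re z₀ < 1, |z₀ - 1/2| > 1/2), and let T' be a right triangle whose parameter z₁ lies in the a-pencil of z₀ and on the geodesic Re z = 0 (right angle at the b-vertex). Then no label-preserving homeomorphism g: T → T' attains the infimal Lipschitz constant L(T,T'): every such homeomorphism satisfies L(g) > L(T,T'). -/

import Mathlib

set_option maxHeartbeats 1000000

open Complex

/-- The normalized unit-area triangle of a parameter `z ∈ ℍ`. -/
noncomputable def normTriangle (z : ℂ) : Set ℂ :=
  convexHull ℝ {(Real.sqrt (2 / z.im) : ℂ) * z, 0, (Real.sqrt (2 / z.im) : ℂ)}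

/-- Let `T_{z₀}` be acute and let `z₁` lie in the `a`-pencil of `z₀` with `Re z₁ = 0`
(right angle at the `b`-vertex). Then no label-preserving Lipschitz homeomorphism
`g : T_{z₀} → T_{z₁}` attains the infimal Lipschitz constant
`L(T_{z₀},T_{z₁}) = √(Im z₁/Im z₀)`: the Lipschitz constant of every such `g` (the
least Lipschitz bound for `g`) is strictly greater than `√(Im z₁/Im z₀)`. -/
theorem no_extremal_homeomorphism
    (z₀ z₁ : ℂ) (h₀ : 0 < z₀.im) (h₁ : 0 < z₁.im)
    (hacute : 0 < z₀.re ∧ z₀.re < 1 ∧ 1 / 2 < ‖z₀ - 1 / 2‖)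
    (hright : z₁.re = 0)
    (hpen₁ : z₀.im * z₁.re ≤ z₁.im * z₀.re)
    (hpen₂ : z₀.im * (1 - z₁.re) ≤ z₁.im * (1 - z₀.re))
    (g : ℂ → ℂ)
    (hcont : ContinuousOn g (normTriangle z₀))
    (hbij : Set.BijOn g (normTriangle z₀) (normTriangle z₁))
    (hga : g ((Real.sqrt (2 / z₀.im) : ℂ) * z₀) = (Real.sqrt (2 / z₁.im) : ℂ) * z₁)
    (hgb : g 0 = 0)
    (hgc : g (Real.sqrt (2 / z₀.im) : ℂ) = (Real.sqrt (2 / z₁.im) : ℂ))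
    (hLip : ∃ K : ℝ, 0 ≤ K ∧ ∀ x ∈ normTriangle z₀, ∀ y ∈ normTriangle z₀,
      dist (g x) (g y) ≤ K * dist x y) :
    Real.sqrt (z₁.im / z₀.im) <
      sInf {K : ℝ | 0 ≤ K ∧ ∀ x ∈ normTriangle z₀, ∀ y ∈ normTriangle z₀,
        dist (g x) (g y) ≤ K * dist x y} := by
  obtain ⟨hre0, hre1, -⟩ := hacute
  set s₀ := Real.sqrt (2 / z₀.im) with hs₀def
  set s₁ := Real.sqrt (2 / z₁.im) with hs₁def
  set T₀ := normTriangle z₀ with hT₀def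
  set T₁ := normTriangle z₁ with hT₁def
  have hs₀pos : 0 < s₀ := Real.sqrt_pos.2 (by positivity)
  have hs₁pos : 0 < s₁ := Real.sqrt_pos.2 (by positivity)
  set H₀ := s₀ * z₀.im with hH₀def
  set H₁ := s₁ * z₁.im with hH₁def
  have hH₀pos : 0 < H₀ := by positivity
  have hH₁pos : 0 < H₁ := by positivity
  -- the candidate constant equals H₁ / H₀
  have hsq0 : H₀ = Real.sqrt (2 * z₀.im) := by
    rw [hH₀def, hs₀def, show 2 * z₀.im = 2 / z₀.im * z₀.im ^ 2 by field_simp,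
      Real.sqrt_mul (by positivity), Real.sqrt_sq h₀.le]
  have hsq1 : H₁ = Real.sqrt (2 * z₁.im) := by
    rw [hH₁def, hs₁def, show 2 * z₁.im = 2 / z₁.im * z₁.im ^ 2 by field_simp,
      Real.sqrt_mul (by positivity), Real.sqrt_sq h₁.le]
  have hL : Real.sqrt (z₁.im / z₀.im) = H₁ / H₀ := by
    rw [hsq0, hsq1, ← Real.sqrt_div (by positivity)]
    congr 1
    field_simp
  -- membership of vertices
  have hT₀eq : T₀ = convexHull ℝ {(s₀ : ℂ) * z₀, 0, (s₀ : ℂ)} := rfl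
  have hT₁eq : T₁ = convexHull ℝ {(s₁ : ℂ) * z₁, 0, (s₁ : ℂ)} := rfl
  have hA₀mem : (s₀ : ℂ) * z₀ ∈ T₀ := by
    rw [hT₀eq]; exact subset_convexHull ℝ _ (by simp)
  have h0₀mem : (0 : ℂ) ∈ T₀ := by
    rw [hT₀eq]; exact subset_convexHull ℝ _ (by simp)
  have hC₀mem : ((s₀ : ℝ) : ℂ) ∈ T₀ := by
    rw [hT₀eq]; exact subset_convexHull ℝ _ (by simp)
  have h0₁mem : (0 : ℂ) ∈ T₁ := by
    rw [hT₁eq]; exact subset_convexHull ℝ _ (by simp)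
  have hC₁mem : ((s₁ : ℝ) : ℂ) ∈ T₁ := by
    rw [hT₁eq]; exact subset_convexHull ℝ _ (by simp)
  -- bounds on the imaginary part on T₀
  have himlb : ∀ w ∈ T₀, 0 ≤ w.im := by
    intro w hw
    refine convexHull_min ?_ (convex_halfSpace_im_ge 0) hw
    rintro w hw
    simp only [Set.mem_insert_iff, Set.mem_singleton_iff] at hw
    rcases hw with rfl | rfl | rfl
    · show (0:ℝ) ≤ _
      rw [Complex.im_ofReal_mul]
      positivity
    · show (0:ℝ) ≤ _
      rw [Complex.zero_im]
    · show (0:ℝ) ≤ _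
      rw [Complex.ofReal_im]
  have himub : ∀ w ∈ T₀, w.im ≤ H₀ := by
    intro w hw
    refine convexHull_min ?_ (convex_halfSpace_im_le H₀) hw
    rintro w hw
    simp only [Set.mem_insert_iff, Set.mem_singleton_iff] at hw
    rcases hw with rfl | rfl | rfl
    · show _ ≤ H₀
      rw [Complex.im_ofReal_mul]
    · show (0:ℂ).im ≤ H₀
      rw [Complex.zero_im]; exact hH₀pos.le
    · show ((s₀:ℝ):ℂ).im ≤ H₀
      rw [Complex.ofReal_im]; exact hH₀pos.le
  -- the segment from 0 to s₁ lies in T₁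
  have hseg : ∀ t : ℝ, t ∈ Set.Icc (0 : ℝ) 1 → ((t * s₁ : ℝ) : ℂ) ∈ T₁ := by
    intro t ht
    have := (convex_convexHull ℝ ({(s₁ : ℂ) * z₁, 0, (s₁ : ℂ)} : Set ℂ))
      (hT₁eq ▸ h0₁mem) (hT₁eq ▸ hC₁mem)
      (a := 1 - t) (b := t) (by linarith [ht.2]) ht.1 (by ring)
    rw [hT₁eq]
    convert this using 1
    push_cast
    simp [Complex.real_smul]
  -- g is a homeomorphism of compact sets
  have hcpt : IsCompact T₀ := by
    rw [hT₀eq]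
    exact (Set.toFinite _).isCompact_convexHull ℝ
  haveI : CompactSpace T₀ := isCompact_iff_compactSpace.mp hcpt
  have hecont : Continuous (hbij.equiv g : T₀ → T₁) := hcont.mapsToRestrict hbij.mapsTo
  let Φ : T₀ ≃ₜ T₁ := hecont.homeoOfEquivCompactToT2
  have hΦval : ∀ v : T₀, (↑(Φ v) : ℂ) = g ↑v := fun v => rfl
  -- the path:  t ↦ Φ⁻¹ of points on the bottom edge of T₁
  set proj : ℝ → ℝ := fun t => max 0 (min 1 t) with hprojdef
  have hproj : ∀ t, proj t ∈ Set.Icc (0 : ℝ) 1 := by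
    intro t
    constructor
    · exact le_max_left _ _
    · exact max_le (by norm_num) (min_le_left _ _)
  set F : ℝ → T₁ := fun t => ⟨((proj t * s₁ : ℝ) : ℂ), hseg _ (hproj t)⟩ with hFdef
  have hFcont : Continuous F := Continuous.subtype_mk (by fun_prop) _
  set c : ℝ → ℝ := fun t => ((Φ.symm (F t) : ℂ)).re with hcdef
  have hccont : Continuous c :=
    Complex.continuous_re.comp (continuous_subtype_val.comp (Φ.symm.continuous.comp hFcont))
  have hc0 : c 0 = 0 := by
    have hF0 : Φ ⟨0, h0₀mem⟩ = F 0 := by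
      apply Subtype.ext
      rw [hΦval]
      simp [hFdef, hprojdef, hgb]
    have : Φ.symm (F 0) = ⟨0, h0₀mem⟩ := by rw [← hF0, Φ.symm_apply_apply]
    rw [hcdef]
    simp [this]
  have hc1 : c 1 = s₀ := by
    have hF1 : Φ ⟨((s₀:ℝ):ℂ), hC₀mem⟩ = F 1 := by
      apply Subtype.ext
      rw [hΦval]
      simp [hFdef, hprojdef, hgc]
    have : Φ.symm (F 1) = ⟨((s₀:ℝ):ℂ), hC₀mem⟩ := by rw [← hF1, Φ.symm_apply_apply]
    rw [hcdef]
    simp [this]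
  -- find x in T₀ with Re x = s₀ * Re z₀ mapping to a real point
  set p := s₀ * z₀.re with hpdef
  have hppos : 0 < p := by positivity
  have hpls : p < s₀ := by
    calc p = s₀ * z₀.re := rfl
    _ < s₀ * 1 := by exact mul_lt_mul_of_pos_left hre1 hs₀pos
    _ = s₀ := mul_one _
  obtain ⟨t, ht01, hct⟩ := intermediate_value_Icc (by norm_num : (0:ℝ) ≤ 1)
    hccont.continuousOn (by rw [hc0, hc1]; exact ⟨hppos.le, hpls.le⟩)
  set x : ℂ := ↑(Φ.symm (F t)) with hxdef
  have hxmem : x ∈ T₀ := (Φ.symm (F t)).2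
  have hxre : x.re = p := hct
  set r := proj t * s₁ with hrdef
  have hr0 : 0 ≤ r := mul_nonneg (hproj t).1 hs₁pos.le
  have hgx : g x = ((r : ℝ) : ℂ) := by
    rw [hxdef, ← hΦval, Φ.apply_symm_apply]
  -- distance computations
  have hA₀re : ((s₀ : ℂ) * z₀).re = p := by simp [hpdef]
  have hA₀im : ((s₀ : ℂ) * z₀).im = H₀ := by simp [hH₀def]
  have hA₁re : ((s₁ : ℂ) * z₁).re = 0 := by simp [hright]
  have hA₁im : ((s₁ : ℂ) * z₁).im = H₁ := by simp [hH₁def]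
  have hd₀ : dist ((s₀ : ℂ) * z₀) x = H₀ - x.im := by
    rw [Complex.dist_eq, Complex.norm_def, Complex.normSq_apply, Complex.sub_re,
      Complex.sub_im, hA₀re, hA₀im, hxre, sub_self, mul_zero, zero_add,
      ← pow_two, Real.sqrt_sq_eq_abs]
    exact abs_of_nonneg (by linarith [himub x hxmem])
  have hd₁ : dist (g ((s₀ : ℂ) * z₀)) (g x) = Real.sqrt (r ^ 2 + H₁ ^ 2) := by
    rw [hga, hgx, Complex.dist_eq, Complex.norm_def, Complex.normSq_apply, Complex.sub_re,
      Complex.sub_im, hA₁re, hA₁im]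
    simp only [Complex.ofReal_re, Complex.ofReal_im, sub_zero, zero_sub]
    ring_nf
  -- every admissible K is strictly larger than H₁ / H₀
  have key : ∀ K : ℝ, 0 ≤ K →
      (∀ a ∈ T₀, ∀ b ∈ T₀, dist (g a) (g b) ≤ K * dist a b) → H₁ / H₀ < K := by
    intro K hK0 hKlip
    by_contra hcon
    push_neg at hcon
    have hKH : K * H₀ ≤ H₁ := by
      calc K * H₀ ≤ H₁ / H₀ * H₀ := by gcongr
      _ = H₁ := by field_simp
    have h2 : Real.sqrt (r ^ 2 + H₁ ^ 2) ≤ K * (H₀ - x.im) := by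
      have := hKlip _ hA₀mem _ hxmem
      rwa [hd₀, hd₁] at this
    have h3 : H₁ ≤ Real.sqrt (r ^ 2 + H₁ ^ 2) := by
      nlinarith [Real.sq_sqrt (show (0:ℝ) ≤ r ^ 2 + H₁ ^ 2 by positivity),
        Real.sqrt_nonneg (r ^ 2 + H₁ ^ 2), sq_nonneg r,
        sq_nonneg (Real.sqrt (r ^ 2 + H₁ ^ 2) - H₁)]
    have him : 0 ≤ x.im := himlb x hxmem
    have h4 : K * (H₀ - x.im) ≤ K * H₀ := by nlinarith
    have h5 : Real.sqrt (r ^ 2 + H₁ ^ 2) ≤ H₁ := by linarith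
    have h6 : r ^ 2 + H₁ ^ 2 ≤ H₁ ^ 2 := by
      have := Real.sq_sqrt (show (0:ℝ) ≤ r ^ 2 + H₁ ^ 2 by positivity)
      nlinarith [Real.sqrt_nonneg (r ^ 2 + H₁ ^ 2)]
    have hr : r = 0 := by nlinarith
    have hx0 : x = 0 := by
      apply hbij.injOn hxmem h0₀mem
      rw [hgx, hgb, hr]
      simp
    rw [hx0] at hxre
    simp at hxre
    exact absurd hxre.symm (ne_of_gt hppos)
  -- the infimum is itself an admissible constant
  set S := {K : ℝ | 0 ≤ K ∧ ∀ a ∈ T₀, ∀ b ∈ T₀, dist (g a) (g b) ≤ K * dist a b} with hSdef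
  have hne : S.Nonempty := hLip
  have hbdd : BddBelow S := ⟨0, fun K hK => hK.1⟩
  have hInf0 : 0 ≤ sInf S := le_csInf hne fun K hK => hK.1
  have hInfmem : sInf S ∈ S := by
    refine ⟨hInf0, ?_⟩
    intro a ha b hb
    rcases eq_or_ne a b with rfl | hab
    · simp
    · have hd : 0 < dist a b := dist_pos.2 hab
      have hle : dist (g a) (g b) / dist a b ≤ sInf S :=
        le_csInf hne fun K hK => (div_le_iff₀ hd).2 (hK.2 a ha b hb)
      calc dist (g a) (g b) = dist (g a) (g b) / dist a b * dist a b := by field_simp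
      _ ≤ sInf S * dist a b := mul_le_mul_of_nonneg_right hle hd.le
  rw [hL]
  exact key _ hInfmem.1 hInfmem.2
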